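/- arXiv:1105.1448 — 7 statements merged into one kernel-verified Lean document; each statement's English description precedes it below -/
import Mathlib

section
/- Let Γ be a totally ordered abelian group and β₀, β₁, …, β_k positive elements of Γ. For each i with 1 ≤ i ≤ k let n̄_i = [G(β₀,…,β_i) : G(β₀,…,β_{i-1})] be the index of the subgroup generated by β₀,…,β_{i-1} in the subgroup generated by β₀,…,β_i, and assume each n̄_i is finite and that n̄_i·β_i < β_{i+1} for 1 ≤ i ≤ k−1. Then every γ in the group generated by β₀,…,β_k with γ ≥ n̄_k·β_k lies in the semigroup generated by β₀,…,β_k (i.e., γ is a sum a₀β₀ + a₁β₁ + … + a_kβ_k with all a_i nonnegative integers). -/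
lemma aux_relindex_nsmul_mem {Γ : Type*} [AddCommGroup Γ] (H K : AddSubgroup Γ)
    {b : Γ} (hb : b ∈ K) : (H.relIndex K) • b ∈ H := by
  have := AddSubgroup.nsmul_index_mem (H.addSubgroupOf K) (⟨b, hb⟩ : K)
  rwa [AddSubgroup.mem_addSubgroupOf] at this

lemma aux_decomp {Γ : Type*} [AddCommGroup Γ] (s : Set Γ) (b : Γ) {γ : Γ}
    (hγ : γ ∈ AddSubgroup.closure (insert b s)) :
    ∃ g ∈ AddSubgroup.closure s, ∃ m : ℤ, γ = g + m • b := by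
  rw [show insert b s = {b} ∪ s from rfl, AddSubgroup.closure_union,
    ← AddSubgroup.zmultiples_eq_closure, AddSubgroup.mem_sup] at hγ
  obtain ⟨y, hy, z, hz, rfl⟩ := hγ
  obtain ⟨m, rfl⟩ := AddSubgroup.mem_zmultiples_iff.mp hy
  exact ⟨z, hz, m, by abel⟩

/-- If `β₀,…,β_k` are positive elements of a totally ordered abelian group,
the indices `n̄_i = [G(β₀,…,β_i) : G(β₀,…,β_{i-1})]` are finite and `n̄_i • β_i < β_{i+1}`
for `1 ≤ i ≤ k-1`, then every `γ` in the group generated by `β₀,…,β_k` with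
`γ ≥ n̄_k • β_k` lies in the semigroup generated by `β₀,…,β_k`. -/
theorem stmt_0 {Γ : Type*} [AddCommGroup Γ] [LinearOrder Γ] [IsOrderedAddMonoid Γ] (k : ℕ) (hk : 1 ≤ k)
    (β : ℕ → Γ) (hpos : ∀ i, i ≤ k → 0 < β i)
    (n : ℕ → ℕ)
    (hn : ∀ i, 1 ≤ i → i ≤ k →
      n i = (AddSubgroup.closure (β '' Set.Iio i)).relIndex
              (AddSubgroup.closure (β '' Set.Iic i)))
    (hfin : ∀ i, 1 ≤ i → i ≤ k → n i ≠ 0)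
    (hgrow : ∀ i, 1 ≤ i → i ≤ k - 1 → (n i) • β i < β (i + 1))
    (γ : Γ) (hγ : γ ∈ AddSubgroup.closure (β '' Set.Iic k))
    (hge : (n k) • β k ≤ γ) :
    γ ∈ AddSubmonoid.closure (β '' Set.Iic k) := by
  suffices H : ∀ i, i ≤ k → ∀ γ : Γ, γ ∈ AddSubgroup.closure (β '' Set.Iic i) → 0 < γ →
      (1 ≤ i → n i • β i ≤ γ) → γ ∈ AddSubmonoid.closure (β '' Set.Iic i) by
    refine H k le_rfl γ hγ (lt_of_lt_of_le ?_ hge) (fun _ => hge)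
    exact nsmul_pos (hpos k le_rfl) (hfin k hk le_rfl)
  intro i
  induction i with
  | zero =>
    intro _ γ hγ hγpos _
    have h0 : β '' Set.Iic 0 = {β 0} := by
      have : Set.Iic 0 = ({0} : Set ℕ) := by ext m; simp [Nat.le_zero]
      rw [this, Set.image_singleton]
    rw [h0, ← AddSubgroup.zmultiples_eq_closure] at hγ
    obtain ⟨m, rfl⟩ := AddSubgroup.mem_zmultiples_iff.mp hγ
    have hβ0 : 0 < β 0 := hpos 0 (Nat.zero_le k)
    have hm : 0 < m := by
      by_contra h
      push_neg at h
      have : m • β 0 ≤ (0:ℤ) • β 0 := zsmul_le_zsmul_left hβ0.le h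
      rw [zero_zsmul] at this
      exact absurd hγpos (not_lt.mpr this)
    have hmm : m • β 0 = m.toNat • β 0 := by
      rw [← natCast_zsmul, Int.toNat_of_nonneg hm.le]
    rw [hmm, h0]
    exact nsmul_mem (AddSubmonoid.subset_closure (Set.mem_singleton (β 0))) _
  | succ i ih =>
    intro hik γ hγ hγpos hge'
    have hk1 : (1:ℕ) ≤ i + 1 := Nat.le_add_left 1 i
    have hNpos : 0 < n (i+1) := Nat.pos_of_ne_zero (hfin (i+1) hk1 hik)
    have hβpos : 0 < β (i+1) := hpos (i+1) hik
    have hge1 : n (i+1) • β (i+1) ≤ γ := hge' hk1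
    have hIic : β '' Set.Iic (i+1) = insert (β (i+1)) (β '' Set.Iic i) := by
      rw [show Set.Iic (i+1) = insert (i+1) (Set.Iic i) by
        ext m; simp [Nat.lt_succ_iff, le_iff_lt_or_eq, or_comm], Set.image_insert_eq]
    have hNmem : n (i+1) • β (i+1) ∈ AddSubgroup.closure (β '' Set.Iic i) := by
      have hIio : β '' Set.Iio (i+1) = β '' Set.Iic i := by
        ext x; simp [Nat.lt_succ_iff]
      have hb : β (i+1) ∈ AddSubgroup.closure (β '' Set.Iic (i+1)) :=
        AddSubgroup.subset_closure ⟨i+1, Set.mem_Iic.mpr le_rfl, rfl⟩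
      have := aux_relindex_nsmul_mem (AddSubgroup.closure (β '' Set.Iio (i+1)))
        (AddSubgroup.closure (β '' Set.Iic (i+1))) hb
      rwa [← hn (i+1) hk1 hik, hIio] at this
    rw [hIic] at hγ
    obtain ⟨g, hg, m, rfl⟩ := aux_decomp _ _ hγ
    set N : ℤ := (n (i+1) : ℤ) with hN
    have hN0 : (0:ℤ) < N := by rw [hN]; exact_mod_cast hNpos
    set a : ℤ := m % N with ha
    set q : ℤ := m / N with hq
    have ha0 : 0 ≤ a := Int.emod_nonneg m hN0.ne'
    have haN : a < N := Int.emod_lt_of_pos m hN0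
    have hmeq : m = N * q + a := by rw [ha, hq]; exact (Int.mul_ediv_add_emod m N).symm
    set g' : Γ := g + q • ((n (i+1)) • β (i+1)) with hg'
    have hg'mem : g' ∈ AddSubgroup.closure (β '' Set.Iic i) :=
      AddSubgroup.add_mem _ hg (AddSubgroup.zsmul_mem _ hNmem q)
    have hdecomp : g + m • β (i+1) = g' + a • β (i+1) := by
      have h1 : q • ((n (i+1)) • β (i+1)) = (N * q) • β (i+1) := by
        rw [← natCast_zsmul, ← hN, ← mul_zsmul, mul_comm]
      rw [hg', h1, hmeq, add_zsmul]; abel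
    have hg'eq : g' = (g + m • β (i+1)) - a • β (i+1) := by rw [hdecomp]; abel
    have hg'ge : β (i+1) ≤ g' := by
      rw [hg'eq]
      calc β (i+1) = (1:ℤ) • β (i+1) := (one_zsmul _).symm
        _ ≤ (N - a) • β (i+1) := zsmul_le_zsmul_left hβpos.le (by omega)
        _ = N • β (i+1) - a • β (i+1) := by rw [sub_zsmul, sub_eq_add_neg]
        _ = (n (i+1)) • β (i+1) - a • β (i+1) := by rw [hN, natCast_zsmul]
        _ ≤ _ := sub_le_sub_right hge1 _
    have hg'S : g' ∈ AddSubmonoid.closure (β '' Set.Iic (i+1)) := by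
      apply AddSubmonoid.closure_mono
        (Set.image_mono (Set.Iic_subset_Iic.mpr (Nat.le_succ i)))
      refine ih (Nat.le_of_succ_le hik) g' hg'mem (lt_of_lt_of_le hβpos hg'ge) ?_
      intro hi1
      have hik' : i ≤ k - 1 := by omega
      exact ((hgrow i hi1 hik').le.trans hg'ge)
    have haβ : a • β (i+1) = a.toNat • β (i+1) := by
      rw [← natCast_zsmul, Int.toNat_of_nonneg ha0]
    rw [hdecomp, haβ]
    exact add_mem hg'S (nsmul_mem
      (AddSubmonoid.subset_closure (Set.mem_image_of_mem β (Set.mem_Iic.mpr (le_refl (i+1))))) _)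
end

section
/- Let Γ be a totally ordered abelian group and β₀, β₁, …, β_k positive elements with finite indices n̄_i = [G(β₀,…,β_i):G(β₀,…,β_{i-1})] satisfying n̄_i·β_i < β_{i+1} for 1 ≤ i ≤ k−1. Then every element of G(β₀,…,β_k) has a unique expansion a₀β₀ + a₁β₁ + ⋯ + a_kβ_k with a₀ ∈ ℤ and 0 ≤ a_i < n̄_i for 1 ≤ i ≤ k. -/
private lemma closure_Iic_succ {Γ : Type*} [AddCommGroup Γ] (β : ℕ → Γ) (k : ℕ) :
    AddSubgroup.closure (β '' Set.Iic (k + 1)) =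
      AddSubgroup.closure (β '' Set.Iic k) ⊔ AddSubgroup.zmultiples (β (k + 1)) := by
  have h : Set.Iic (k + 1) = Set.Iic k ∪ {k + 1} := by
    ext m
    simp only [Set.mem_Iic, Set.mem_union, Set.mem_singleton_iff]
    omega
  rw [h, Set.image_union, Set.image_singleton, AddSubgroup.closure_union,
    AddSubgroup.zmultiples_eq_closure]

private lemma key_dvd {Γ : Type*} [AddCommGroup Γ] (β : ℕ → Γ) (i : ℕ) (m : ℤ) :
    m • β i ∈ AddSubgroup.closure (β '' Set.Iio i) ↔
      (((AddSubgroup.closure (β '' Set.Iio i)).relIndex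
        (AddSubgroup.closure (β '' Set.Iic i)) : ℤ)) ∣ m := by
  set H := AddSubgroup.closure (β '' Set.Iio i) with hHdef
  set K := AddSubgroup.closure (β '' Set.Iic i) with hKdef
  set q := QuotientAddGroup.mk' H with hqdef
  have hq : ∀ x : Γ, q x = 0 ↔ x ∈ H := fun x => QuotientAddGroup.eq_zero_iff x
  have hmem : m • β i ∈ H ↔ m • (q (β i)) = 0 := by
    rw [← map_zsmul q, hq]
  have hmap : AddSubgroup.map q K = AddSubgroup.zmultiples (q (β i)) := by
    rw [hKdef, AddMonoidHom.map_closure, AddSubgroup.zmultiples_eq_closure]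
    apply le_antisymm
    · rw [AddSubgroup.closure_le]
      rintro _ ⟨_, ⟨j, hj, rfl⟩, rfl⟩
      rcases lt_or_eq_of_le (show j ≤ i from hj) with hji | rfl
      · have hβj : β j ∈ H := AddSubgroup.subset_closure ⟨j, hji, rfl⟩
        have h0 : q (β j) = 0 := (hq _).2 hβj
        rw [SetLike.mem_coe, h0]
        exact zero_mem _
      · exact AddSubgroup.subset_closure rfl
    · rw [AddSubgroup.closure_le, Set.singleton_subset_iff]
      exact AddSubgroup.subset_closure ⟨β i, ⟨i, Set.mem_Iic.mpr le_rfl, rfl⟩, rfl⟩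
  have hker : q.ker = H := QuotientAddGroup.ker_mk' H
  have hrel : H.relIndex K = addOrderOf (q (β i)) := by
    calc H.relIndex K = q.ker.relIndex K := by rw [hker]
      _ = Nat.card (AddSubgroup.map q K) := AddSubgroup.relIndex_ker K q
      _ = Nat.card (AddSubgroup.zmultiples (q (β i))) := by rw [hmap]
      _ = addOrderOf (q (β i)) := Nat.card_zmultiples _
  rw [hmem, hrel]
  exact addOrderOf_dvd_iff_zsmul_eq_zero.symm

private lemma main_ind {Γ : Type*} [AddCommGroup Γ] [LinearOrder Γ] [IsOrderedAddMonoid Γ] (β : ℕ → Γ)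
    (hβ0 : 0 < β 0) (n : ℕ → ℕ) :
    ∀ k : ℕ,
      (∀ i, 1 ≤ i → i ≤ k → ∀ m : ℤ,
        (m • β i ∈ AddSubgroup.closure (β '' Set.Iio i) ↔ (n i : ℤ) ∣ m)) →
      (∀ i, 1 ≤ i → i ≤ k → n i ≠ 0) →
      ∀ γ, γ ∈ AddSubgroup.closure (β '' Set.Iic k) →
      ∃! a : Fin (k + 1) → ℤ,
        (∀ i : Fin (k + 1), 1 ≤ (i : ℕ) → 0 ≤ a i ∧ a i < (n i : ℤ)) ∧
        γ = ∑ i : Fin (k + 1), a i • β (i : ℕ) := by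
  intro k
  induction k with
  | zero =>
    intro _ _ γ hγ
    have h0 : Set.Iic (0 : ℕ) = {0} := by ext x; simp [Nat.le_zero]
    rw [h0, Set.image_singleton, ← AddSubgroup.zmultiples_eq_closure] at hγ
    obtain ⟨m, rfl⟩ := AddSubgroup.mem_zmultiples_iff.mp hγ
    refine ⟨fun _ => m, ⟨?_, ?_⟩, ?_⟩
    · intro i hi
      exact absurd hi (by have := i.isLt; omega)
    · simp
    · intro b ⟨_, hbsum⟩
      rw [Fin.sum_univ_one] at hbsum
      have hb0 : b 0 = m := (zsmul_left_strictMono hβ0).injective hbsum.symm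
      funext i
      fin_cases i
      exact hb0
  | succ k ih =>
    intro hmem hfin γ hγ
    have hIio : Set.Iio (k + 1) = Set.Iic k := Set.ext fun m => Nat.lt_succ_iff
    have hNpos : (0 : ℤ) < (n (k + 1) : ℤ) := by
      have := hfin (k + 1) (by omega) le_rfl
      omega
    rw [closure_Iic_succ] at hγ
    obtain ⟨g, hg, z, hz, rfl⟩ := AddSubgroup.mem_sup.mp hγ
    obtain ⟨m, rfl⟩ := AddSubgroup.mem_zmultiples_iff.mp hz
    set N : ℤ := (n (k + 1) : ℤ) with hN
    set r : ℤ := m % N with hr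
    have hr0 : 0 ≤ r := Int.emod_nonneg m (by omega)
    have hrN : r < N := Int.emod_lt_of_pos m hNpos
    have hdvd : N ∣ (m - r) := by
      rw [hr, Int.emod_def]
      ring_nf
      exact ⟨m / N, by ring⟩
    have hγ' : g + m • β (k + 1) - r • β (k + 1) ∈ AddSubgroup.closure (β '' Set.Iic k) := by
      have h1 : (m - r) • β (k + 1) ∈ AddSubgroup.closure (β '' Set.Iio (k + 1)) :=
        (hmem (k + 1) (by omega) le_rfl (m - r)).mpr hdvd
      rw [hIio] at h1
      have heq : g + m • β (k + 1) - r • β (k + 1) = g + (m - r) • β (k + 1) := by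
        rw [sub_zsmul]; abel
      rw [heq]
      exact add_mem hg h1
    obtain ⟨a', ⟨ha'cond, ha'sum⟩, ha'uniq⟩ :=
      ih (fun i h1 h2 m => hmem i h1 (h2.trans (Nat.le_succ k)) m)
         (fun i h1 h2 => hfin i h1 (h2.trans (Nat.le_succ k)))
         _ hγ'
    have hsum_snoc : ∀ c : Fin (k + 1) → ℤ, ∀ d : ℤ,
        ∑ i : Fin (k + 2), (Fin.snoc c d : Fin (k + 2) → ℤ) i • β (i : ℕ)
          = (∑ j : Fin (k + 1), c j • β (j : ℕ)) + d • β (k + 1) := by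
      intro c d
      rw [Fin.sum_univ_castSucc]
      simp
    refine ⟨Fin.snoc a' r, ⟨?_, ?_⟩, ?_⟩
    · intro i hi
      rcases Fin.eq_castSucc_or_eq_last i with ⟨j, rfl⟩ | rfl
      · have := ha'cond j (by simpa using hi)
        simpa using this
      · simp only [Fin.snoc_last, Fin.val_last]
        exact ⟨hr0, hrN⟩
    · rw [hsum_snoc, ← ha'sum]
      abel
    · intro b ⟨hbcond, hbsum⟩
      have hbS : ∑ j : Fin (k + 1), b j.castSucc • β (j : ℕ) ∈
          AddSubgroup.closure (β '' Set.Iic k) := by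
        refine sum_mem fun j _ => zsmul_mem (AddSubgroup.subset_closure ?_) _
        exact ⟨(j : ℕ), Set.mem_Iic.mpr (by omega), rfl⟩
      have hbsum' : g + m • β (k + 1) =
          (∑ j : Fin (k + 1), b j.castSucc • β (j : ℕ)) + b (Fin.last (k + 1)) • β (k + 1) := by
        rw [hbsum, Fin.sum_univ_castSucc]
        simp
      have hblast : b (Fin.last (k + 1)) = r := by
        obtain ⟨hb0, hbN⟩ := hbcond (Fin.last (k + 1)) (by simp)
        have hmem' : (b (Fin.last (k + 1)) - r) • β (k + 1) ∈
            AddSubgroup.closure (β '' Set.Iio (k + 1)) := by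
          rw [hIio]
          have heq : (b (Fin.last (k + 1)) - r) • β (k + 1) =
              (g + m • β (k + 1) - r • β (k + 1)) -
              (∑ j : Fin (k + 1), b j.castSucc • β (j : ℕ)) := by
            rw [sub_zsmul]
            rw [hbsum']
            abel
          rw [heq]
          exact sub_mem hγ' hbS
        have hdvd' : N ∣ (b (Fin.last (k + 1)) - r) :=
          (hmem (k + 1) (by omega) le_rfl _).mp hmem'
        have : b (Fin.last (k + 1)) - r = 0 :=
          Int.eq_zero_of_dvd_of_natAbs_lt_natAbs hdvd' (by simp only [Fin.val_last] at hbN hb0; omega)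
        omega
      have hbrest : (fun j : Fin (k + 1) => b j.castSucc) = a' := by
        apply ha'uniq
        refine ⟨?_, ?_⟩
        · intro j hj
          have := hbcond j.castSucc (by simpa using hj)
          simpa using this
        · rw [hbsum', hblast]
          abel
      funext i
      rcases Fin.eq_castSucc_or_eq_last i with ⟨j, rfl⟩ | rfl
      · rw [Fin.snoc_castSucc, ← hbrest]
      · rw [Fin.snoc_last, hblast]

/-- Under the hypotheses of Lemma 2, every element of `G(β₀,…,β_k)` has a
unique expansion `a₀β₀ + ⋯ + a_kβ_k` with `a₀ ∈ ℤ` and `0 ≤ a_i < n̄_i` for `1 ≤ i ≤ k`. -/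
theorem stmt_2 {Γ : Type*} [AddCommGroup Γ] [LinearOrder Γ] [IsOrderedAddMonoid Γ] (k : ℕ) (hk : 1 ≤ k)
    (β : ℕ → Γ) (hpos : ∀ i, i ≤ k → 0 < β i)
    (n : ℕ → ℕ)
    (hn : ∀ i, 1 ≤ i → i ≤ k →
      n i = (AddSubgroup.closure (β '' Set.Iio i)).relIndex
              (AddSubgroup.closure (β '' Set.Iic i)))
    (hfin : ∀ i, 1 ≤ i → i ≤ k → n i ≠ 0)
    (hgrow : ∀ i, 1 ≤ i → i ≤ k - 1 → (n i) • β i < β (i + 1))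
    (γ : Γ) (hγ : γ ∈ AddSubgroup.closure (β '' Set.Iic k)) :
    ∃! a : Fin (k + 1) → ℤ,
      (∀ i : Fin (k + 1), 1 ≤ (i : ℕ) → 0 ≤ a i ∧ a i < (n i : ℤ)) ∧
      γ = ∑ i : Fin (k + 1), a i • β (i : ℕ) := by
  have hmem : ∀ i, 1 ≤ i → i ≤ k → ∀ m : ℤ,
      (m • β i ∈ AddSubgroup.closure (β '' Set.Iio i) ↔ (n i : ℤ) ∣ m) := by
    intro i h1 h2 m
    rw [key_dvd β i m, hn i h1 h2]
  exact main_ind β (hpos 0 (Nat.zero_le k)) n k hmem hfin γ hγ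
end

section
/- Define rational numbers β₀ = 1, β₁ = 3/2, and β_i = 2β_{i-1} + 1/2^i for i ≥ 2. Then for every i ≥ 1, the index [G(β₀,…,β_i) : G(β₀,…,β_{i-1})] of subgroups of ℚ equals 2, and 2·β_i < β_{i+1}. -/
lemma rel_two (a : ℚ) (ha : a ≠ 0) :
    (AddSubgroup.zmultiples (2 * a)).relIndex (AddSubgroup.zmultiples a) = 2 := by
  set f : ℤ →+ ℚ := zmultiplesHom ℚ a with hf
  have hmap : AddSubgroup.map f ⊤ = AddSubgroup.zmultiples a := by
    ext x
    simp [AddSubgroup.mem_zmultiples_iff, hf, eq_comm]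
  have hcomap : AddSubgroup.comap f (AddSubgroup.zmultiples (2 * a)) =
      AddSubgroup.zmultiples (2 : ℤ) := by
    ext n
    simp only [AddSubgroup.mem_comap, AddSubgroup.mem_zmultiples_iff, hf,
      zmultiplesHom_apply]
    simp only [zsmul_eq_mul, smul_eq_mul]
    constructor
    · rintro ⟨k, hk⟩
      refine ⟨k, ?_⟩
      have h2 : ((k * 2 : ℤ) : ℚ) * a = ((n : ℚ)) * a := by push_cast; linarith
      exact_mod_cast mul_right_cancel₀ ha h2
    · rintro ⟨k, hk⟩
      exact ⟨k, by rw [← hk]; push_cast; ring⟩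
  have h := AddSubgroup.relIndex_comap f (H := AddSubgroup.zmultiples (2 * a))
    (⊤ : AddSubgroup ℤ)
  rw [hmap, hcomap, AddSubgroup.relIndex_top_right, Int.index_zmultiples] at h
  simpa using h.symm

/-- With `β₀ = 1`, `β₁ = 3/2`, `β_i = 2β_{i-1} + 1/2^i` for `i ≥ 2`,
for every `i ≥ 1` the index `[G(β₀,…,β_i) : G(β₀,…,β_{i-1})]` of subgroups of `ℚ`
equals `2`, and `2 β_i < β_{i+1}`. -/
theorem stmt_4 (β : ℕ → ℚ) (h0 : β 0 = 1) (h1 : β 1 = 3 / 2)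
    (hrec : ∀ i, 2 ≤ i → β i = 2 * β (i - 1) + 1 / 2 ^ i) :
    ∀ i, 1 ≤ i →
      (AddSubgroup.closure (β '' Set.Iio i)).relIndex
        (AddSubgroup.closure (β '' Set.Iic i)) = 2 ∧
      2 * β i < β (i + 1) := by
  have key : ∀ i, AddSubgroup.closure (β '' Set.Iic i)
      = AddSubgroup.zmultiples (((2 : ℚ) ^ i)⁻¹) := by
    intro i
    induction i with
    | zero =>
        have : β '' Set.Iic 0 = {(1 : ℚ)} := by
          simp [Set.Iic, show {x : ℕ | x ≤ 0} = {0} from by ext x; simp, h0]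
        rw [this, ← AddSubgroup.zmultiples_eq_closure]
        norm_num
    | succ i ih =>
        set c : ℚ := ((2 : ℚ) ^ (i + 1))⁻¹ with hc
        have hc2 : ((2 : ℚ) ^ i)⁻¹ = 2 * c := by
          rw [hc]; field_simp; ring
        -- β i ∈ zmultiples ((2^i)⁻¹)
        have hβi : β i ∈ AddSubgroup.zmultiples (((2 : ℚ) ^ i)⁻¹) := by
          rw [← ih]
          exact AddSubgroup.subset_closure ⟨i, by simp, rfl⟩
        obtain ⟨k, hk⟩ := AddSubgroup.mem_zmultiples_iff.mp hβi
        rw [zsmul_eq_mul] at hk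
        -- β (i+1) is an integer multiple of c, and c is an integer combination
        have hup : ∃ m : ℤ, β (i + 1) = (m : ℚ) * c := by
          rcases Nat.eq_zero_or_pos i with hi | hi
          · subst hi; exact ⟨3, by rw [h1, hc]; norm_num⟩
          · have hr := hrec (i + 1) (by omega)
            simp only [Nat.add_sub_cancel] at hr
            refine ⟨4 * k + 1, ?_⟩
            rw [hr, ← hk, hc2, hc]; push_cast; ring
        have hlin : ∃ q : ℤ, c = β (i + 1) + (q : ℚ) * β i := by
          rcases Nat.eq_zero_or_pos i with hi | hi
          · subst hi; exact ⟨-1, by rw [h1, h0, hc]; norm_num⟩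
          · have hr := hrec (i + 1) (by omega)
            simp only [Nat.add_sub_cancel] at hr
            refine ⟨-2, ?_⟩
            rw [hr, hc]; push_cast; ring
        have hins : Set.Iic (i + 1) = insert (i + 1) (Set.Iic i) := by
          ext x; simp [Nat.le_add_one_iff]; omega
        rw [hins, Set.image_insert_eq]
        apply le_antisymm
        · rw [AddSubgroup.closure_le]
          rintro x (rfl | hx)
          · obtain ⟨m, hm⟩ := hup
            exact AddSubgroup.mem_zmultiples_iff.mpr ⟨m, by rw [zsmul_eq_mul, ← hm]⟩
          · have : x ∈ AddSubgroup.zmultiples (((2 : ℚ) ^ i)⁻¹) := by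
              rw [← ih]; exact AddSubgroup.subset_closure hx
            obtain ⟨m, hm⟩ := AddSubgroup.mem_zmultiples_iff.mp this
            refine AddSubgroup.mem_zmultiples_iff.mpr ⟨2 * m, ?_⟩
            rw [zsmul_eq_mul] at hm ⊢
            rw [← hm, hc2]; push_cast; ring
        · have hcmem : c ∈ AddSubgroup.closure (insert (β (i + 1)) (β '' Set.Iic i)) := by
            have h1' : β (i + 1) ∈ AddSubgroup.closure (insert (β (i + 1)) (β '' Set.Iic i)) :=
              AddSubgroup.subset_closure (Set.mem_insert _ _)
            have h2' : β i ∈ AddSubgroup.closure (insert (β (i + 1)) (β '' Set.Iic i)) :=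
              AddSubgroup.subset_closure (Set.mem_insert_of_mem _ ⟨i, by simp, rfl⟩)
            obtain ⟨q, hq⟩ := hlin
            rw [hq, ← zsmul_eq_mul]
            exact add_mem h1' (zsmul_mem h2' q)
          intro x hx
          obtain ⟨m, hm⟩ := AddSubgroup.mem_zmultiples_iff.mp hx
          rw [← hm]
          exact zsmul_mem hcmem m
  intro i hi
  obtain ⟨j, rfl⟩ : ∃ j, i = j + 1 := ⟨i - 1, by omega⟩
  constructor
  · have hio : Set.Iio (j + 1) = Set.Iic j := by ext x; simp [Nat.lt_succ_iff]
    rw [hio, key j, key (j + 1)]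
    have h2c : ((2 : ℚ) ^ j)⁻¹ = 2 * ((2 : ℚ) ^ (j + 1))⁻¹ := by field_simp; ring
    rw [h2c]
    exact rel_two _ (by positivity)
  · have := hrec (j + 1 + 1) (by omega)
    simp only [Nat.add_sub_cancel] at this
    rw [this]
    have : (0 : ℚ) < 1 / 2 ^ (j + 1 + 1) := by positivity
    linarith
end

section
/- Define rational numbers β₀ = 1, β₁ = 3/2, and β_i = 2β_{i-1} + 1/2^i for i ≥ 2. Then the subgroup of ℚ generated by all the β_i equals the group of dyadic rationals ⋃_{i≥0} (1/2^i)ℤ. -/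
/-- With `β₀ = 1`, `β₁ = 3/2`, `β_i = 2β_{i-1} + 1/2^i` for `i ≥ 2`,
the subgroup of `ℚ` generated by all the `β_i` is the group of dyadic rationals. -/
theorem stmt_5 (β : ℕ → ℚ) (h0 : β 0 = 1) (h1 : β 1 = 3 / 2)
    (hrec : ∀ i, 2 ≤ i → β i = 2 * β (i - 1) + 1 / 2 ^ i) :
    (AddSubgroup.closure (Set.range β) : Set ℚ)
      = {q : ℚ | ∃ m : ℤ, ∃ n : ℕ, q = (m : ℚ) / 2 ^ n} := by
  have hb : ∀ j : ℕ, β j ∈ AddSubgroup.closure (Set.range β) :=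
    fun j => AddSubgroup.subset_closure ⟨j, rfl⟩
  have hdy : ∀ i : ℕ, ∃ m : ℤ, ∃ n : ℕ, β i = (m : ℚ) / 2 ^ n := by
    intro i
    induction i using Nat.strong_induction_on with
    | _ i ih =>
      match i with
      | 0 => exact ⟨1, 0, by simp [h0]⟩
      | 1 => exact ⟨3, 1, by norm_num [h1]⟩
      | (k+2) =>
        obtain ⟨m, n, hmn⟩ := ih (k+1) (by omega)
        refine ⟨2 * m * 2 ^ (k+2) + 2 ^ n, n + (k+2), ?_⟩
        have h : β (k+2) = 2 * β (k+1) + 1 / 2 ^ (k+2) := by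
          simpa using hrec (k+2) (by omega)
        have h2 : (2:ℚ) ^ n ≠ 0 := by positivity
        have h2' : (2:ℚ) ^ (k+2) ≠ 0 := by positivity
        rw [h, hmn, show (2:ℚ) * ((m:ℚ)/2^n) = (2*m)/2^n from by ring,
          div_add_div _ _ h2 h2', pow_add]
        push_cast
        ring_nf
  have key : ∀ n : ℕ, (1 / 2 ^ n : ℚ) ∈ AddSubgroup.closure (Set.range β) := by
    intro n
    match n with
    | 0 => simpa [h0] using hb 0
    | 1 =>
      have := sub_mem (hb 1) (hb 0)
      rw [h1, h0] at this
      have he : (1 / 2 ^ 1 : ℚ) = 3 / 2 - 1 := by norm_num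
      rwa [he]
    | (k+2) =>
      have h : β (k+2) = 2 * β (k+1) + 1 / 2 ^ (k+2) := by
        simpa using hrec (k+2) (by omega)
      have he : (1 / 2 ^ (k+2) : ℚ) = β (k+2) - (β (k+1) + β (k+1)) := by
        rw [h]; ring
      rw [he]
      exact sub_mem (hb (k+2)) (add_mem (hb (k+1)) (hb (k+1)))
  ext q
  simp only [Set.mem_setOf_eq, SetLike.mem_coe]
  constructor
  · intro hq
    refine AddSubgroup.closure_induction ?_ ?_ ?_ ?_ hq
    · rintro x ⟨i, rfl⟩
      exact hdy i
    · exact ⟨0, 0, by norm_num⟩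
    · rintro x y _ _ ⟨m, n, rfl⟩ ⟨m', n', rfl⟩
      refine ⟨m * 2 ^ n' + m' * 2 ^ n, n + n', ?_⟩
      have h2 : (2:ℚ) ^ n ≠ 0 := by positivity
      have h2' : (2:ℚ) ^ n' ≠ 0 := by positivity
      rw [div_add_div _ _ h2 h2', pow_add]
      push_cast
      ring_nf
    · rintro x _ ⟨m, n, rfl⟩
      exact ⟨-m, n, by push_cast; ring⟩
  · rintro ⟨m, n, rfl⟩
    have := AddSubgroup.zsmul_mem _ (key n) m
    simpa [zsmul_eq_mul, mul_one_div, div_eq_mul_inv] using this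
end

section
/- Let β₀, …, β_Λ be positive integers with gcd(β₀,…,β_Λ)=1 generating a numerical semigroup S, with n̄_i = gcd(β₀,…,β_{i-1})/gcd(β₀,…,β_i), and assume β_{i+1} > n̄_i·β_i for 1 ≤ i < Λ. Then n̄_i·β_i belongs to the semigroup generated by β₀,…,β_{i-1} for every i with 1 ≤ i ≤ Λ. -/
open Finset

private lemma exists_t (a b m : ℕ) (ha : 0 < a) (h : Nat.gcd a b ∣ m) :
    ∃ t : ℕ, t < a / Nat.gcd a b ∧ (a : ℤ) ∣ (m : ℤ) - t * b := by
  set d := Nat.gcd a b with hd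
  have hd0 : 0 < d := Nat.gcd_pos_of_pos_left b ha
  have hn : 0 < a / d := Nat.div_pos (Nat.le_of_dvd ha (Nat.gcd_dvd_left a b)) hd0
  obtain ⟨c, hc⟩ := h
  set n : ℕ := a / d with hnn
  set y : ℤ := Nat.gcdB a b * c with hy
  have h1 : (0:ℤ) ≤ y % n := Int.emod_nonneg y (by positivity)
  have h2 : y % n < n := Int.emod_lt_of_pos y (by exact_mod_cast hn)
  refine ⟨(y % n).toNat, ?_, ?_⟩
  · omega
  · have hm : (m : ℤ) = a * (Nat.gcdA a b * c) + b * y := by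
      have hab := Nat.gcd_eq_gcd_ab a b
      rw [hy]
      have : (m : ℤ) = (d : ℤ) * c := by exact_mod_cast hc
      rw [this, hab]; ring
    have htc : ((y % n).toNat : ℤ) = y % n := Int.toNat_of_nonneg h1
    have hnd : (n : ℤ) ∣ y - y % n :=
      ⟨y / n, by linarith [Int.emod_add_mul_ediv y n]⟩
    have hanb : (a : ℤ) ∣ (n : ℤ) * b := by
      have hh : n * b = a * (b / d) := by
        obtain ⟨b', hb'⟩ : d ∣ b := Nat.gcd_dvd_right a b
        obtain ⟨a', ha'⟩ : d ∣ a := Nat.gcd_dvd_left a b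
        rw [hnn, ha', hb', Nat.mul_div_cancel_left _ hd0, Nat.mul_div_cancel_left _ hd0]
        ring
      exact_mod_cast Dvd.intro (b / d) hh.symm
    obtain ⟨q, hq⟩ := hnd
    have heq : (m : ℤ) - (y % n).toNat * b = a * (Nat.gcdA a b * c) + (n * b) * q := by
      rw [hm, htc]; linear_combination (b : ℤ) * hq
    rw [heq]
    exact dvd_add (Dvd.intro _ rfl) (Dvd.dvd.mul_right hanb q)

private lemma key (β : ℕ → ℕ) (hβ0 : 0 < β 0) :
    ∀ k, 1 ≤ k → ∀ M : ℕ,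
      Finset.gcd (Finset.range k) β ∣ M →
      (∑ j ∈ Finset.Ico 1 k,
        (Finset.gcd (Finset.range j) β / Finset.gcd (Finset.range (j+1)) β - 1) * β j) ≤ M →
      M ∈ AddSubmonoid.closure (β '' Set.Iio k) := by
  intro k
  induction k with
  | zero => omega
  | succ k ih =>
    intro _ M hdvd hle
    rcases Nat.eq_zero_or_pos k with hk0 | hk1
    · subst hk0
      have hb : β 0 ∣ M := by simpa using hdvd
      obtain ⟨c, hc⟩ := hb
      have hmem : β 0 ∈ β '' Set.Iio 1 := ⟨0, by simp, rfl⟩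
      have : M = c • β 0 := by rw [smul_eq_mul, hc, mul_comm]
      rw [this]
      exact nsmul_mem (AddSubmonoid.subset_closure hmem) c
    · -- k ≥ 1
      have hgk : 0 < Finset.gcd (Finset.range k) β := by
        rcases Nat.eq_zero_or_pos (Finset.gcd (Finset.range k) β) with h | h
        · rw [Finset.gcd_eq_zero_iff] at h
          exact absurd (h 0 (Finset.mem_range.mpr hk1)) (by omega)
        · exact h
      have hins : Finset.gcd (Finset.range (k+1)) β
          = Nat.gcd (Finset.gcd (Finset.range k) β) (β k) := by
        rw [Finset.range_add_one, Finset.gcd_insert]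
        exact Nat.gcd_comm _ _
      rw [hins] at hdvd
      obtain ⟨t, ht, htd⟩ := exists_t _ _ _ hgk hdvd
      -- split sum
      rw [Finset.sum_Ico_succ_top hk1] at hle
      rw [hins] at hle
      set n := Finset.gcd (Finset.range k) β / Nat.gcd (Finset.gcd (Finset.range k) β) (β k)
        with hn
      have htle : t * β k ≤ (n - 1) * β k := Nat.mul_le_mul_right _ (by omega)
      set T := ∑ j ∈ Finset.Ico 1 k,
        (Finset.gcd (Finset.range j) β / Finset.gcd (Finset.range (j+1)) β - 1) * β j with hT
      have hTM : T + t * β k ≤ M := le_trans (by omega) hle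
      have hsub : t * β k ≤ M := by omega
      have hdvd2 : Finset.gcd (Finset.range k) β ∣ M - t * β k := by
        have : ((M - t * β k : ℕ) : ℤ) = (M : ℤ) - t * β k := by
          push_cast [hsub]; ring
        have := htd
        rw [← Int.natCast_dvd_natCast]
        rw [show ((M - t * β k : ℕ) : ℤ) = (M : ℤ) - t * β k by push_cast [hsub]; ring]
        exact htd
      have hIH := ih hk1 (M - t * β k) hdvd2 (by omega)
      have hmono : AddSubmonoid.closure (β '' Set.Iio k)
          ≤ AddSubmonoid.closure (β '' Set.Iio (k+1)) :=
        AddSubmonoid.closure_mono (Set.image_mono (fun x hx => lt_trans hx (Nat.lt_succ_self k)))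
      have hβk : β k ∈ β '' Set.Iio (k+1) := ⟨k, Nat.lt_succ_self k, rfl⟩
      have : M = (M - t * β k) + t • β k := by simp [smul_eq_mul]; omega
      rw [this]
      exact AddSubmonoid.add_mem _ (hmono hIH)
        (nsmul_mem (AddSubmonoid.subset_closure hβk) t)

/-- For positive integers `β₀,…,β_Λ` with gcd `1`, with
`n̄_i = gcd(β₀,…,β_{i-1}) / gcd(β₀,…,β_i)` and `β_{i+1} > n̄_i β_i` for `1 ≤ i < Λ`,
the element `n̄_i · β_i` belongs to the semigroup generated by `β₀,…,β_{i-1}`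
for every `1 ≤ i ≤ Λ`. -/
theorem stmt_9 (Λ : ℕ) (hΛ : 1 ≤ Λ) (β : ℕ → ℕ)
    (hpos : ∀ i, i ≤ Λ → 0 < β i)
    (hgcd : Finset.gcd (Finset.range (Λ + 1)) β = 1)
    (hgrow : ∀ i, 1 ≤ i → i < Λ →
      (Finset.gcd (Finset.range i) β / Finset.gcd (Finset.range (i + 1)) β) * β i
        < β (i + 1)) :
    ∀ i, 1 ≤ i → i ≤ Λ →
      (Finset.gcd (Finset.range i) β / Finset.gcd (Finset.range (i + 1)) β) * β i
        ∈ AddSubmonoid.closure (β '' Set.Iio i) := by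
  have hβ0 : 0 < β 0 := hpos 0 (by omega)
  have hgpos : ∀ m, 1 ≤ m → 0 < Finset.gcd (Finset.range m) β := by
    intro m hm
    rcases Nat.eq_zero_or_pos (Finset.gcd (Finset.range m) β) with h | h
    · rw [Finset.gcd_eq_zero_iff] at h
      exact absurd (h 0 (Finset.mem_range.mpr hm)) (by omega)
    · exact h
  have hdvdsucc : ∀ m, Finset.gcd (Finset.range (m+1)) β ∣ Finset.gcd (Finset.range m) β :=
    fun m => Finset.gcd_mono (by intro x hx; simp at hx ⊢; omega)
  have hnpos : ∀ m, 1 ≤ m →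
      1 ≤ Finset.gcd (Finset.range m) β / Finset.gcd (Finset.range (m+1)) β := by
    intro m hm
    exact Nat.one_le_div_iff (hgpos (m+1) (by omega)) |>.mpr
      (Nat.le_of_dvd (hgpos m hm) (hdvdsucc m))
  -- the telescoping bound
  have hTle : ∀ i, 1 ≤ i → i ≤ Λ →
      (∑ j ∈ Finset.Ico 1 i,
        (Finset.gcd (Finset.range j) β / Finset.gcd (Finset.range (j+1)) β - 1) * β j)
      ≤ β i := by
    intro i
    induction i with
    | zero => omega
    | succ i ih =>
      intro _ hiΛ
      rcases Nat.eq_zero_or_pos i with h0 | h1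
      · subst h0; simp
      · rw [Finset.sum_Ico_succ_top h1]
        have hih := ih h1 (by omega)
        have hg := hgrow i h1 (by omega)
        have hn := hnpos i h1
        set n := Finset.gcd (Finset.range i) β / Finset.gcd (Finset.range (i+1)) β with hn'
        calc (∑ j ∈ Finset.Ico 1 i,
            (Finset.gcd (Finset.range j) β / Finset.gcd (Finset.range (j+1)) β - 1) * β j)
            + (n - 1) * β i ≤ β i + (n - 1) * β i := by omega
          _ = n * β i := by
              have h1 : β i ≤ n * β i := Nat.le_mul_of_pos_left _ hn
              rw [Nat.sub_one_mul]; omega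
          _ ≤ β (i+1) := le_of_lt hg
  intro i hi hiΛ
  apply key β hβ0 i hi
  · -- gcd (range i) β ∣ n_i * β i
    obtain ⟨c, hc⟩ : Finset.gcd (Finset.range (i+1)) β ∣ β i :=
      Finset.gcd_dvd (Finset.mem_range.mpr (Nat.lt_succ_self i))
    obtain ⟨e, he⟩ := hdvdsucc i
    refine ⟨c, ?_⟩
    rw [hc, he]
    have hg1 : 0 < Finset.gcd (Finset.range (i+1)) β := hgpos (i+1) (by omega)
    rw [Nat.mul_div_cancel_left e hg1]
    ring
  · calc _ ≤ β i := hTle i hi hiΛ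
      _ ≤ _ := Nat.le_mul_of_pos_left _ (hnpos i hi)
end

section
/- Let β₀, …, β_Λ be positive integers with gcd 1 generating a numerical semigroup S, where n̄_i = gcd(β₀,…,β_{i-1})/gcd(β₀,…,β_i) and β_{i+1} > n̄_i·β_i for 1 ≤ i < Λ. Then S is symmetric: there exists m ∈ ℤ such that for all s ∈ ℤ, s ∈ S if and only if m − s ∉ S. -/
namespace Stmt10

def Dd (β : ℕ → ℕ) (k : ℕ) : ℕ := Finset.gcd (Finset.range (k+1)) β

def Nn (β : ℕ → ℕ) (k : ℕ) : ℕ := Dd β (k-1) / Dd β k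

def Ss (β : ℕ → ℕ) (k : ℕ) : AddSubmonoid ℤ :=
  AddSubmonoid.closure ((fun j => (β j : ℤ)) '' Set.Iic k)

def Mm (β : ℕ → ℕ) : ℕ → ℤ
  | 0 => -(β 0 : ℤ)
  | (k+1) => Mm β k + ((Nn β (k+1) : ℤ) - 1) * (β (k+1) : ℤ)

variable {β : ℕ → ℕ} {k : ℕ}

lemma Dd_succ (β : ℕ → ℕ) (k : ℕ) : Dd β (k+1) = Nat.gcd (β (k+1)) (Dd β k) := by
  rw [Dd, Finset.range_add_one, Finset.gcd_insert]; rfl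

lemma Dd_dvd_beta {j : ℕ} (h : j ≤ k) : Dd β k ∣ β j :=
  Finset.gcd_dvd (Finset.mem_range.mpr (by omega))

lemma Dd_succ_dvd (β : ℕ → ℕ) (k : ℕ) : Dd β (k+1) ∣ Dd β k := by
  rw [Dd_succ]; exact Nat.gcd_dvd_right _ _

lemma Dd_dvd_beta_succ (β : ℕ → ℕ) (k : ℕ) : Dd β (k+1) ∣ β (k+1) := Dd_dvd_beta le_rfl

lemma Dd_pos (h0 : 0 < β 0) : 0 < Dd β k := by
  rcases Nat.eq_zero_or_pos (Dd β k) with h | h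
  · have h2 := Dd_dvd_beta (β := β) (k := k) (Nat.zero_le k)
    rw [h] at h2
    omega
  · exact h

lemma Nn_mul_Dd (β : ℕ → ℕ) (k : ℕ) : Nn β (k+1) * Dd β (k+1) = Dd β k :=
  Nat.div_mul_cancel (Dd_succ_dvd β k)

lemma Nn_pos (h0 : 0 < β 0) : 0 < Nn β (k+1) :=
  Nat.div_pos (Nat.le_of_dvd (Dd_pos h0) (Dd_succ_dvd β k)) (Dd_pos h0)

lemma Dd_zero (β : ℕ → ℕ) : Dd β 0 = β 0 := by
  simp [Dd, Finset.range_one]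

lemma gen_mem {j : ℕ} (h : j ≤ k) : (β j : ℤ) ∈ Ss β k :=
  AddSubmonoid.subset_closure ⟨j, h, rfl⟩

lemma Ss_mono {l : ℕ} (h : k ≤ l) : Ss β k ≤ Ss β l :=
  AddSubmonoid.closure_mono (Set.image_mono (Set.Iic_subset_Iic.mpr h))

lemma Ss_nonneg {s : ℤ} (hs : s ∈ Ss β k) : 0 ≤ s := by
  refine AddSubmonoid.closure_induction (fun x hx => ?_) le_rfl
    (fun x y _ _ hx hy => by linarith) hs
  obtain ⟨j, _, rfl⟩ := hx
  positivity

lemma Ss_dvd {s : ℤ} (hs : s ∈ Ss β k) : (Dd β k : ℤ) ∣ s := by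
  refine AddSubmonoid.closure_induction (fun x hx => ?_) (dvd_zero _)
    (fun x y _ _ hx hy => dvd_add hx hy) hs
  obtain ⟨j, hj, rfl⟩ := hx
  simpa using Int.natCast_dvd_natCast.mpr (Dd_dvd_beta (β:=β) hj)

lemma Mm_dvd (β : ℕ → ℕ) : ∀ k, (Dd β k : ℤ) ∣ Mm β k := by
  intro k
  induction k with
  | zero => exact dvd_neg.mpr (Int.natCast_dvd_natCast.mpr (Dd_dvd_beta le_rfl))
  | succ n ih =>
    show (Dd β (n+1) : ℤ) ∣ Mm β n + ((Nn β (n+1) : ℤ) - 1) * (β (n+1) : ℤ)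
    exact dvd_add ((Int.natCast_dvd_natCast.mpr (Dd_succ_dvd β n)).trans ih)
      (Dvd.dvd.mul_left (Int.natCast_dvd_natCast.mpr (Dd_dvd_beta_succ β n)) _)

lemma coprime_Nb' (h0 : 0 < β 0) :
    Nat.Coprime (Nn β (k+1)) (β (k+1) / Dd β (k+1)) := by
  have hg : 0 < Dd β (k+1) := Dd_pos h0
  have h1 : Nat.gcd (Nn β (k+1) * Dd β (k+1)) ((β (k+1) / Dd β (k+1)) * Dd β (k+1))
      = Nat.gcd (Nn β (k+1)) (β (k+1) / Dd β (k+1)) * Dd β (k+1) :=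
    Nat.gcd_mul_right _ _ _
  rw [Nn_mul_Dd, Nat.div_mul_cancel (Dd_dvd_beta_succ β k)] at h1
  have h2 : Nat.gcd (Dd β k) (β (k+1)) = Dd β (k+1) := by
    rw [Nat.gcd_comm, ← Dd_succ]
  rw [h2] at h1
  have : Nat.gcd (Nn β (k+1)) (β (k+1) / Dd β (k+1)) * Dd β (k+1) = 1 * Dd β (k+1) := by
    omega
  exact Nat.eq_of_mul_eq_mul_right hg this

lemma resid_unique_aux (h0 : 0 < β 0) {r r' : ℕ} (hr : r < Nn β (k+1)) (hle : r' ≤ r)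
    (hdvd : (Dd β k : ℤ) ∣ ((r : ℤ) - (r' : ℤ)) * (β (k+1) : ℤ)) : r = r' := by
  have hg : 0 < Dd β (k+1) := Dd_pos h0
  have hcast : ((r : ℤ) - (r' : ℤ)) * (β (k+1) : ℤ) = (((r - r') * β (k+1) : ℕ) : ℤ) := by
    push_cast [hle]; ring
  rw [hcast] at hdvd
  have hnat : Dd β k ∣ (r - r') * β (k+1) := Int.natCast_dvd_natCast.mp hdvd
  have hbg : Dd β (k+1) * (β (k+1) / Dd β (k+1)) = β (k+1) :=
    Nat.mul_div_cancel' (Dd_dvd_beta_succ β k)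
  rw [← Nn_mul_Dd β k, ← hbg] at hnat
  have hnat2 : Nn β (k+1) * Dd β (k+1) ∣ ((r - r') * (β (k+1) / Dd β (k+1))) * Dd β (k+1) := by
    have e : (r - r') * (Dd β (k+1) * (β (k+1) / Dd β (k+1)))
        = ((r - r') * (β (k+1) / Dd β (k+1))) * Dd β (k+1) := by ring
    rwa [e] at hnat
  have hnat3 : Nn β (k+1) ∣ (r - r') * (β (k+1) / Dd β (k+1)) :=
    (Nat.mul_dvd_mul_iff_right hg).mp hnat2
  have := (coprime_Nb' (β := β) (k := k) h0).dvd_of_dvd_mul_right hnat3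
  have := Nat.eq_zero_of_dvd_of_lt this (by omega)
  omega

lemma resid_unique (h0 : 0 < β 0) {r r' : ℕ} (hr : r < Nn β (k+1)) (hr' : r' < Nn β (k+1))
    (hdvd : (Dd β k : ℤ) ∣ ((r : ℤ) - (r' : ℤ)) * (β (k+1) : ℤ)) : r = r' := by
  rcases le_total r' r with h | h
  · exact resid_unique_aux h0 hr h hdvd
  · refine (resid_unique_aux h0 hr' h ?_).symm
    have : ((r' : ℤ) - r) * (β (k+1)) = -(((r : ℤ) - r') * β (k+1)) := by ring
    rw [this]
    exact hdvd.neg_right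

lemma Dd_dvd_Nn_mul (β : ℕ → ℕ) (k : ℕ) : Dd β k ∣ Nn β (k+1) * β (k+1) := by
  refine ⟨β (k+1) / Dd β (k+1), ?_⟩
  calc Nn β (k+1) * β (k+1)
      = Nn β (k+1) * (Dd β (k+1) * (β (k+1) / Dd β (k+1))) := by
        rw [Nat.mul_div_cancel' (Dd_dvd_beta_succ β k)]
    _ = Nn β (k+1) * Dd β (k+1) * (β (k+1) / Dd β (k+1)) := by ring
    _ = Dd β k * (β (k+1) / Dd β (k+1)) := by rw [Nn_mul_Dd]

lemma resid_exists (h0 : 0 < β 0) {s : ℤ} (hd : (Dd β (k+1) : ℤ) ∣ s) :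
    ∃ r : ℕ, r < Nn β (k+1) ∧ (Dd β k : ℤ) ∣ s - (r : ℤ) * (β (k+1) : ℤ) := by
  set N := Nn β (k+1) with hNdef
  set g := Dd β (k+1) with hgdef
  have hg : 0 < g := Dd_pos h0
  have hN : 0 < N := Nn_pos h0
  set b := β (k+1) / g with hbdef
  have hbg : (g * b : ℕ) = β (k+1) := Nat.mul_div_cancel' (Dd_dvd_beta_succ β k)
  have hic : IsCoprime (N : ℤ) (b : ℤ) := by
    rw [Int.isCoprime_iff_gcd_eq_one]
    exact_mod_cast coprime_Nb' (β := β) (k := k) h0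
  obtain ⟨u, v, huv⟩ := hic
  obtain ⟨s', rfl⟩ := hd
  set x : ℤ := s' * v with hxdef
  have hNne : (N : ℤ) ≠ 0 := by exact_mod_cast hN.ne'
  refine ⟨(x % (N : ℤ)).toNat, ?_, ?_⟩
  · have h1 := Int.emod_lt_of_pos x (show (0:ℤ) < N by exact_mod_cast hN)
    have h2 := Int.emod_nonneg x hNne
    omega
  · have hr : ((x % (N : ℤ)).toNat : ℤ) = x % (N : ℤ) :=
      Int.toNat_of_nonneg (Int.emod_nonneg x hNne)
    rw [hr]
    have hdk : (Dd β k : ℤ) = (N : ℤ) * g := by exact_mod_cast (Nn_mul_Dd β k).symm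
    have hβ : (β (k+1) : ℤ) = g * b := by exact_mod_cast hbg.symm
    -- N ∣ s' - x*b
    have h3 : (N : ℤ) ∣ s' - x * b := by
      refine ⟨s' * u, ?_⟩
      have : s' - x * b = s' * (1 - v * b) := by rw [hxdef]; ring
      rw [this, ← huv]; ring
    have h4 : (N : ℤ) ∣ x - x % (N : ℤ) := by
      rw [Int.emod_def]
      exact ⟨x / N, by ring⟩
    have h5 : (N : ℤ) ∣ s' - (x % (N : ℤ)) * b := by
      have e : s' - (x % (N : ℤ)) * b = (s' - x * b) + (x - x % (N : ℤ)) * b := by ring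
      rw [e]
      exact dvd_add h3 (h4.mul_right b)
    rw [hdk, hβ]
    obtain ⟨c, hc⟩ := h5
    refine ⟨c, ?_⟩
    have : (g : ℤ) * s' - x % (N:ℤ) * ((g:ℤ) * b) = (g:ℤ) * (s' - (x % (N:ℤ)) * b) := by ring
    rw [this, hc]; ring

lemma Nmul_mem (h0 : 0 < β 0)
    (hcond : ∀ s : ℤ, (Dd β k : ℤ) ∣ s → Mm β k < s → s ∈ Ss β k)
    (hb : Mm β k < (Nn β (k+1) : ℤ) * (β (k+1) : ℤ)) :
    (Nn β (k+1) : ℤ) * (β (k+1) : ℤ) ∈ Ss β k := by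
  refine hcond _ ?_ hb
  exact_mod_cast Int.natCast_dvd_natCast.mpr (Dd_dvd_Nn_mul β k)

lemma decomp (h0 : 0 < β 0)
    (hcond : ∀ s : ℤ, (Dd β k : ℤ) ∣ s → Mm β k < s → s ∈ Ss β k)
    (hb : Mm β k < (Nn β (k+1) : ℤ) * (β (k+1) : ℤ))
    {s : ℤ} (hs : s ∈ Ss β (k+1)) :
    ∃ r : ℕ, r < Nn β (k+1) ∧ s - (r : ℤ) * (β (k+1) : ℤ) ∈ Ss β k := by
  have hN : 0 < Nn β (k+1) := Nn_pos h0
  have hNb := Nmul_mem h0 hcond hb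
  refine AddSubmonoid.closure_induction (fun x hx => ?_)
    ⟨0, hN, by simpa using (Ss β k).zero_mem⟩ (fun x y _ _ ihx ihy => ?_) hs
  · obtain ⟨j, hj, rfl⟩ := hx
    simp only []
    rcases Nat.lt_or_ge j (k+1) with hjk | hjk
    · exact ⟨0, hN, by simpa using gen_mem (β := β) (Nat.lt_succ_iff.mp hjk)⟩
    · have hj' : j = k+1 := le_antisymm hj hjk
      subst hj'
      rcases Nat.lt_or_ge 1 (Nn β (k+1)) with h1 | h1
      · exact ⟨1, h1, by simpa using (Ss β k).zero_mem⟩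
      · have hN1 : Nn β (k+1) = 1 := by omega
        refine ⟨0, hN, ?_⟩
        have hdvd : (Dd β k : ℤ) ∣ (β (k+1) : ℤ) := by
          have := Dd_dvd_Nn_mul β k
          rw [hN1, one_mul] at this
          exact_mod_cast Int.natCast_dvd_natCast.mpr this
        have hlt : Mm β k < (β (k+1) : ℤ) := by
          rw [hN1] at hb; push_cast at hb; linarith
        simpa using hcond _ hdvd hlt
  · obtain ⟨r₁, hr₁, hm₁⟩ := ihx
    obtain ⟨r₂, hr₂, hm₂⟩ := ihy
    rcases Nat.lt_or_ge (r₁ + r₂) (Nn β (k+1)) with h | h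
    · refine ⟨r₁ + r₂, h, ?_⟩
      have e : x + y - ((r₁ + r₂ : ℕ) : ℤ) * (β (k+1) : ℤ)
          = (x - (r₁ : ℤ) * β (k+1)) + (y - (r₂ : ℤ) * β (k+1)) := by push_cast; ring
      rw [e]; exact add_mem hm₁ hm₂
    · refine ⟨r₁ + r₂ - Nn β (k+1), by omega, ?_⟩
      have hcast : ((r₁ + r₂ - Nn β (k+1) : ℕ) : ℤ)
          = (r₁ : ℤ) + r₂ - (Nn β (k+1) : ℤ) := by omega
      have e : x + y - ((r₁ + r₂ - Nn β (k+1) : ℕ) : ℤ) * (β (k+1) : ℤ)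
          = (x - (r₁ : ℤ) * β (k+1)) + (y - (r₂ : ℤ) * β (k+1))
            + (Nn β (k+1) : ℤ) * (β (k+1) : ℤ) := by rw [hcast]; ring
      rw [e]; exact add_mem (add_mem hm₁ hm₂) hNb

lemma mem_iff (h0 : 0 < β 0)
    (hcond : ∀ s : ℤ, (Dd β k : ℤ) ∣ s → Mm β k < s → s ∈ Ss β k)
    (hb : Mm β k < (Nn β (k+1) : ℤ) * (β (k+1) : ℤ))
    {s : ℤ} {r : ℕ} (hr : r < Nn β (k+1))
    (hdvd : (Dd β k : ℤ) ∣ s - (r : ℤ) * (β (k+1) : ℤ)) :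
    s ∈ Ss β (k+1) ↔ s - (r : ℤ) * (β (k+1) : ℤ) ∈ Ss β k := by
  constructor
  · intro hs
    obtain ⟨r', hr', hm⟩ := decomp h0 hcond hb hs
    have hdvd' : (Dd β k : ℤ) ∣ s - (r' : ℤ) * (β (k+1) : ℤ) := Ss_dvd hm
    have hsub : (Dd β k : ℤ) ∣ ((r : ℤ) - (r' : ℤ)) * (β (k+1) : ℤ) := by
      have e : ((r : ℤ) - (r' : ℤ)) * (β (k+1) : ℤ)
          = (s - (r' : ℤ) * β (k+1)) - (s - (r : ℤ) * β (k+1)) := by ring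
      rw [e]; exact dvd_sub hdvd' hdvd
    have : r = r' := resid_unique h0 hr hr' hsub
    rwa [this]
  · intro h
    have h1 : s - (r : ℤ) * (β (k+1) : ℤ) ∈ Ss β (k+1) := Ss_mono (Nat.le_succ k) h
    have h2 : (r : ℤ) * (β (k+1) : ℤ) ∈ Ss β (k+1) := by
      have := (Ss β (k+1)).nsmul_mem (gen_mem (β := β) (le_refl (k+1))) r
      rwa [nsmul_eq_mul] at this
    have h3 := add_mem h1 h2
    have e : s - (r : ℤ) * (β (k+1) : ℤ) + (r : ℤ) * (β (k+1) : ℤ) = s := by ring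
    rwa [e] at h3

def Sym (β : ℕ → ℕ) (k : ℕ) : Prop :=
  ∀ s : ℤ, (Dd β k : ℤ) ∣ s → (s ∈ Ss β k ↔ Mm β k - s ∉ Ss β k)

lemma cond_of_sym (hsym : Sym β k) :
    ∀ s : ℤ, (Dd β k : ℤ) ∣ s → Mm β k < s → s ∈ Ss β k := fun s hd hlt =>
  (hsym s hd).mpr fun hmem => absurd (Ss_nonneg hmem) (by linarith)

lemma Ss_zero_iff (h0 : 0 < β 0) {s : ℤ} : s ∈ Ss β 0 ↔ (β 0 : ℤ) ∣ s ∧ 0 ≤ s := by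
  have himg : ((fun j => (β j : ℤ)) '' Set.Iic 0) = {(β 0 : ℤ)} := by
    ext x; simp [Nat.le_zero, eq_comm]
  rw [Ss, himg, AddSubmonoid.mem_closure_singleton]
  constructor
  · rintro ⟨n, rfl⟩
    rw [nsmul_eq_mul]
    exact ⟨Dvd.intro_left _ rfl, by positivity⟩
  · rintro ⟨⟨t, rfl⟩, hnn⟩
    have hβ : (0 : ℤ) < (β 0 : ℤ) := by exact_mod_cast h0
    have ht : 0 ≤ t := by nlinarith
    refine ⟨t.toNat, ?_⟩
    rw [nsmul_eq_mul, Int.toNat_of_nonneg ht, mul_comm]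

lemma sym_zero (h0 : 0 < β 0) : Sym β 0 := by
  intro s hd
  rw [Dd_zero] at hd
  have hβ : (0 : ℤ) < (β 0 : ℤ) := by exact_mod_cast h0
  have hm : Mm β 0 - s = -(β 0 : ℤ) - s := rfl
  rw [Ss_zero_iff h0, Ss_zero_iff h0, hm]
  constructor
  · rintro ⟨_, hs⟩ ⟨_, hneg⟩
    linarith
  · intro h
    refine ⟨hd, ?_⟩
    by_contra hs
    push_neg at hs
    apply h
    refine ⟨dvd_sub (dvd_neg.mpr dvd_rfl) hd, ?_⟩
    have : (β 0 : ℤ) ≤ -s := Int.le_of_dvd (by linarith) hd.neg_right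
    linarith

lemma sym_succ (h0 : 0 < β 0) (hsym : Sym β k)
    (hb : Mm β k < (Nn β (k+1) : ℤ) * (β (k+1) : ℤ)) : Sym β (k+1) := by
  have hcond := cond_of_sym hsym
  intro s hd
  obtain ⟨r, hrN, hrd⟩ := resid_exists h0 hd
  have hN : 0 < Nn β (k+1) := Nn_pos h0
  have e1 := mem_iff h0 hcond hb hrN hrd
  set r2 : ℕ := Nn β (k+1) - 1 - r with hr2def
  have hr2N : r2 < Nn β (k+1) := by omega
  have hc : (Mm β (k+1) - s) - (r2 : ℤ) * (β (k+1) : ℤ)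
      = Mm β k - (s - (r : ℤ) * (β (k+1) : ℤ)) := by
    have h1 : (r2 : ℤ) = (Nn β (k+1) : ℤ) - 1 - (r : ℤ) := by omega
    have h2 : Mm β (k+1) = Mm β k + ((Nn β (k+1) : ℤ) - 1) * (β (k+1) : ℤ) := rfl
    rw [h1, h2]; ring
  have hdvd2 : (Dd β k : ℤ) ∣ (Mm β (k+1) - s) - (r2 : ℤ) * (β (k+1) : ℤ) := by
    rw [hc]; exact dvd_sub (Mm_dvd β k) hrd
  have e2 := mem_iff h0 hcond hb hr2N hdvd2
  rw [hc] at e2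
  rw [e1, hsym _ hrd]
  exact (not_congr e2).symm

section Main
variable {Λ : ℕ}

lemma grow' (hgrow : ∀ i, 1 ≤ i → i < Λ →
      (Finset.gcd (Finset.range i) β / Finset.gcd (Finset.range (i + 1)) β) * β i
        < β (i + 1))
    (i : ℕ) (h1 : 1 ≤ i) (h2 : i < Λ) : Nn β i * β i < β (i+1) := by
  have h := hgrow i h1 h2
  have e : i - 1 + 1 = i := by omega
  rw [Nn, Dd, Dd, e]
  exact h

lemma mlt (h0 : 0 < β 0)
    (hgrow : ∀ i, 1 ≤ i → i < Λ →
      (Finset.gcd (Finset.range i) β / Finset.gcd (Finset.range (i + 1)) β) * β i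
        < β (i + 1)) :
    ∀ k, 1 ≤ k → k ≤ Λ → Mm β k < (Nn β k : ℤ) * (β k : ℤ) := by
  intro k hk
  induction k, hk using Nat.le_induction with
  | base =>
    intro _
    have h2 : Mm β 1 = -(β 0 : ℤ) + ((Nn β 1 : ℤ) - 1) * (β 1 : ℤ) := rfl
    rw [h2]
    have hβ0 : (0 : ℤ) < (β 0 : ℤ) := by exact_mod_cast h0
    have hβ1 : (0 : ℤ) ≤ (β 1 : ℤ) := by positivity
    nlinarith
  | succ n hn ih =>
    intro hΛ
    have ihn := ih (by omega)
    have hgrown : Nn β n * β n < β (n+1) := grow' hgrow n hn (by omega)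
    have hgrowz : (Nn β n : ℤ) * (β n : ℤ) < (β (n+1) : ℤ) := by exact_mod_cast hgrown
    have hNpos : 0 < Nn β (n+1) := Nn_pos h0
    have hNz : (1 : ℤ) ≤ (Nn β (n+1) : ℤ) := by exact_mod_cast hNpos
    have hβ : (0 : ℤ) ≤ (β (n+1) : ℤ) := by positivity
    have h2 : Mm β (n+1) = Mm β n + ((Nn β (n+1) : ℤ) - 1) * (β (n+1) : ℤ) := rfl
    rw [h2]
    nlinarith

lemma mlt2 (h0 : 0 < β 0)
    (hgrow : ∀ i, 1 ≤ i → i < Λ →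
      (Finset.gcd (Finset.range i) β / Finset.gcd (Finset.range (i + 1)) β) * β i
        < β (i + 1))
    (k : ℕ) (hk : k + 1 ≤ Λ) : Mm β k < (Nn β (k+1) : ℤ) * (β (k+1) : ℤ) := by
  have hNpos : 0 < Nn β (k+1) := Nn_pos h0
  have hNz : (1 : ℤ) ≤ (Nn β (k+1) : ℤ) := by exact_mod_cast hNpos
  have hβ : (0 : ℤ) ≤ (β (k+1) : ℤ) := by positivity
  match k with
  | 0 =>
    have h1 : Mm β 0 = -(β 0 : ℤ) := rfl
    have hβ0 : (0 : ℤ) < (β 0 : ℤ) := by exact_mod_cast h0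
    rw [h1]
    nlinarith
  | (j+1) =>
    have h1 : Mm β (j+1) < (Nn β (j+1) : ℤ) * (β (j+1) : ℤ) :=
      mlt h0 hgrow (j+1) (by omega) (by omega)
    have h2 : Nn β (j+1) * β (j+1) < β (j+2) := grow' hgrow (j+1) (by omega) (by omega)
    have h2z : (Nn β (j+1) : ℤ) * (β (j+1) : ℤ) < (β (j+2) : ℤ) := by exact_mod_cast h2
    nlinarith

end Main

end Stmt10

/-- For positive integers `β₀,…,β_Λ` with gcd `1`, with
`n̄_i = gcd(β₀,…,β_{i-1}) / gcd(β₀,…,β_i)` and `β_{i+1} > n̄_i β_i` for `1 ≤ i < Λ`,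
the numerical semigroup `S` generated by `β₀,…,β_Λ` is symmetric: there is `m ∈ ℤ`
with `s ∈ S ↔ m - s ∉ S` for all `s ∈ ℤ`. -/
theorem stmt_10 (Λ : ℕ) (hΛ : 1 ≤ Λ) (β : ℕ → ℕ)
    (hpos : ∀ i, i ≤ Λ → 0 < β i)
    (hgcd : Finset.gcd (Finset.range (Λ + 1)) β = 1)
    (hgrow : ∀ i, 1 ≤ i → i < Λ →
      (Finset.gcd (Finset.range i) β / Finset.gcd (Finset.range (i + 1)) β) * β i
        < β (i + 1)) :
    ∃ m : ℤ, ∀ s : ℤ,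
      s ∈ AddSubmonoid.closure ((fun j => (β j : ℤ)) '' Set.Iic Λ) ↔
      m - s ∉ AddSubmonoid.closure ((fun j => (β j : ℤ)) '' Set.Iic Λ) := by
  have h0 : 0 < β 0 := hpos 0 (by omega)
  have key : ∀ k, k ≤ Λ → Stmt10.Sym β k := by
    intro k
    induction k with
    | zero => exact fun _ => Stmt10.sym_zero h0
    | succ n ih =>
      intro hn
      exact Stmt10.sym_succ h0 (ih (by omega)) (Stmt10.mlt2 h0 hgrow n hn)
  have hsym := key Λ le_rfl
  refine ⟨Stmt10.Mm β Λ, fun s => ?_⟩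
  have hd : (Stmt10.Dd β Λ : ℤ) ∣ s := by
    have : Stmt10.Dd β Λ = 1 := hgcd
    rw [this]
    exact one_dvd s
  exact hsym s hd
end

section
/- Define β₀ = 1, β₁ = 5/3 and suppose β_n = b_n + 5/3^n with b_n a positive integer and b_n > 3b_{n-1} for n ≥ 2 (so 3β_{n-1} < β_n). Fix n ≥ 2 and let T be the semigroup generated by {β_i + β_j : 0 ≤ i ≤ j ≤ n−1} together with β₀ + β_n. If β₁ + β_n = r(β₀ + β_n) + τ with r a positive integer and τ a (possibly empty) nonnegative-integer combination of the elements {β_i + β_j : i ≤ j ≤ n−1}, then r = 1 and τ = 2/3; but all elements β_i + β_j are ≥ 2, contradiction. Hence β₁ + β_n ∉ T. -/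
/-- With `β₀ = 1`, `β₁ = 5/3`, `β_i = b_i + 5/3^i` (`b_i` positive integers,
`b_i > 3 b_{i-1}`, `b₂ > 5`), for fixed `n ≥ 2` the element `β₁ + β_n` does not belong
to the semigroup `T` generated by `{β_i + β_j : 0 ≤ i ≤ j ≤ n-1}` together with `β₀ + β_n`. -/
theorem stmt_19 (β : ℕ → ℚ) (b : ℕ → ℤ)
    (h0 : β 0 = 1) (h1 : β 1 = 5 / 3)
    (hb : ∀ i, 2 ≤ i → 0 < b i)
    (hβ : ∀ i, 2 ≤ i → β i = (b i : ℚ) + 5 / 3 ^ i)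
    (hbg : ∀ i, 3 ≤ i → 3 * b (i - 1) < b i)
    (hb2 : 5 < b 2)
    (n : ℕ) (hn : 2 ≤ n) :
    β 1 + β n ∉ AddSubmonoid.closure
      ({x : ℚ | ∃ i j : ℕ, i ≤ j ∧ j ≤ n - 1 ∧ x = β i + β j} ∪ {β 0 + β n}) := by
  intro hmem
  have hβn : β n = (b n : ℚ) + 5 / 3 ^ n := hβ n hn
  have hbn : (1:ℚ) ≤ (b n : ℚ) := by exact_mod_cast hb n hn
  have hβnpos : (0:ℚ) < β n := by
    rw [hβn]
    have : (0:ℚ) < 5 / 3 ^ n := by positivity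
    linarith
  have hpos : (0:ℚ) < (3:ℚ) ^ (n - 1) := by positivity
  -- every β i with i ≤ n-1 satisfies: 3^(n-1) * β i is an integer and β i ≥ 1
  have hpow : ∀ i : ℕ, i ≤ n - 1 → ∃ k : ℤ, (3:ℚ) ^ (n - 1) * β i = (k : ℚ) ∧ 1 ≤ β i := by
    intro i hi
    match i with
    | 0 => exact ⟨3 ^ (n - 1), by rw [h0]; push_cast; ring, by rw [h0]⟩
    | 1 =>
        refine ⟨5 * 3 ^ (n - 2), ?_, by rw [h1]; norm_num⟩
        have e : (3:ℚ) ^ (n - 1) = 3 ^ (n - 2) * 3 := by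
          rw [← pow_succ]; congr 1; omega
        rw [h1, e]; push_cast; ring
    | (i + 2) =>
        have h2 : 2 ≤ i + 2 := by omega
        have hβi := hβ _ h2
        have hbi : (1:ℚ) ≤ (b (i+2) : ℚ) := by exact_mod_cast hb _ h2
        refine ⟨3 ^ (n - 1) * b (i + 2) + 5 * 3 ^ (n - 1 - (i + 2)), ?_, ?_⟩
        · have e : (3:ℚ) ^ (n - 1) = 3 ^ (n - 1 - (i + 2)) * 3 ^ (i + 2) := by
            rw [← pow_add]; congr 1; omega
          have h3 : (3:ℚ) ^ (i + 2) ≠ 0 := by positivity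
          rw [hβi]; push_cast
          rw [e]; field_simp
        · have : (0:ℚ) < 5 / 3 ^ (i + 2) := by positivity
          rw [hβi]; linarith
  -- main invariant
  have main : ∀ x ∈ AddSubmonoid.closure
      ({x : ℚ | ∃ i j : ℕ, i ≤ j ∧ j ≤ n - 1 ∧ x = β i + β j} ∪ {β 0 + β n}),
      ∃ (r : ℕ) (m : ℤ), (m = 0 ∨ (2:ℚ) ≤ (m : ℚ) / 3 ^ (n - 1)) ∧
        x = (m : ℚ) / 3 ^ (n - 1) + (r : ℚ) * (β 0 + β n) := by
    intro x hx
    induction hx using AddSubmonoid.closure_induction with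
    | mem y hy =>
        rcases hy with ⟨i, j, hij, hjn, rfl⟩ | hy
        · obtain ⟨ki, hki, hβi⟩ := hpow i (le_trans hij hjn)
          obtain ⟨kj, hkj, hβj⟩ := hpow j hjn
          refine ⟨0, ki + kj, Or.inr ?_, ?_⟩
          · rw [le_div_iff₀ hpos]
            push_cast
            nlinarith [hki, hkj, hβi, hβj, hpos]
          · push_cast
            rw [zero_mul, add_zero, eq_div_iff (ne_of_gt hpos)]
            linear_combination hki + hkj
        · simp only [Set.mem_singleton_iff] at hy
          exact ⟨1, 0, Or.inl rfl, by rw [hy]; push_cast; ring⟩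
    | zero => exact ⟨0, 0, Or.inl rfl, by push_cast; ring⟩
    | add a c ha hc iha ihc =>
        obtain ⟨r1, m1, hc1, he1⟩ := iha
        obtain ⟨r2, m2, hc2, he2⟩ := ihc
        refine ⟨r1 + r2, m1 + m2, ?_, ?_⟩
        · rcases hc1 with rfl | hc1 <;> rcases hc2 with rfl | hc2
          · exact Or.inl (by ring)
          · refine Or.inr ?_; push_cast; rw [add_div]; simpa using hc2
          · refine Or.inr ?_; push_cast; rw [add_div]; simpa using hc1
          · refine Or.inr ?_
            push_cast; rw [add_div]
            have h1' : (0:ℚ) ≤ (m2:ℚ) / 3 ^ (n-1) := by linarith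
            linarith
        · rw [he1, he2]; push_cast; ring
  obtain ⟨r, m, hcond, heq⟩ := main _ hmem
  have hm0 : (0:ℚ) ≤ (m : ℚ) / 3 ^ (n - 1) := by
    rcases hcond with rfl | h
    · simp
    · linarith
  -- r ≤ 1
  have hr1 : r ≤ 1 := by
    by_contra hr
    push_neg at hr
    have : (2:ℚ) ≤ (r : ℚ) := by exact_mod_cast hr
    rw [h0, h1] at heq
    nlinarith
  interval_cases r
  · -- r = 0 : denominator contradiction
    have e : (3:ℚ) ^ n = 3 ^ (n - 1) * 3 := by rw [← pow_succ]; congr 1; omega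
    rw [h0, h1, hβn, e] at heq
    push_cast at heq
    have hdiv : (m : ℚ) / 3 ^ (n - 1) = 5 / 3 + (b n : ℚ) + 5 / (3 ^ (n - 1) * 3) := by
      linarith
    rw [div_eq_iff (ne_of_gt hpos)] at hdiv
    have hq : (3:ℚ) * m = 5 * 3 ^ (n - 1) + 3 ^ (n - 1) * 3 * (b n : ℚ) + 5 := by
      rw [hdiv]; field_simp
    have hz : (3:ℤ) * m = 5 * 3 ^ (n - 1) + 3 ^ (n - 1) * 3 * b n + 5 := by
      exact_mod_cast hq
    obtain ⟨w, hw⟩ : (3:ℤ) ∣ 3 ^ (n - 1) * 3 * b n := ⟨3 ^ (n - 1) * b n, by ring⟩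
    obtain ⟨u, hu⟩ : (3:ℤ) ∣ 3 ^ (n - 1) := dvd_pow_self 3 (by omega)
    rw [hw, hu] at hz
    omega
  · -- r = 1 : τ = 2/3, contradiction with τ = 0 ∨ τ ≥ 2
    rw [h0, h1] at heq
    push_cast at heq
    have hm : (m : ℚ) / 3 ^ (n - 1) = 2 / 3 := by linarith
    rcases hcond with rfl | h
    · norm_num at hm
    · rw [hm] at h; norm_num at h
end
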